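/- In the coupling-from-the-past construction, the unique element of S_{τ^b} is distributed according to the stationary distribution π of the transition matrix of the Markov automaton, and the backward coupling time τ^b has the same distribution (in particular the same expectation) as the forward coupling time τ of the grand coupling. -/

import Mathlib

open MeasureTheory
open scoped Classical

/-- Backward set `S_i = S · (u_{-i}, ..., u_{-1})` with `v k = u_{-(k+1)}`. -/
def backSet {S A : Type} (act : S → A → S) (v : ℕ → A) (i : ℕ) : Set S :=
  Set.range fun x : S => (((List.range i).reverse).map v).foldl act x

/-- Forward set `S · (u_1, ..., u_i)`. -/
def fwdSet {S A : Type} (act : S → A → S) (v : ℕ → A) (i : ℕ) : Set S :=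
  Set.range fun x : S => (List.ofFn fun k : Fin i => v (k : ℕ)).foldl act x

set_option linter.unusedSectionVars false
section CFTPAux

namespace CFTP

variable {S A : Type}

/-- The word `w` collapses all states to a single one. -/
def coll (act : S → A → S) (w : List A) : Prop :=
  (Set.range fun x : S => w.foldl act x).Subsingleton

lemma coll_append_right {act : S → A → S} {w : List A} (h : coll act w) (w2 : List A) :
    coll act (w ++ w2) := by
  rintro a ⟨x, rfl⟩ b ⟨y, rfl⟩
  simp only [List.foldl_append]
  exact congrArg (fun z => List.foldl act z w2) (h ⟨x, rfl⟩ ⟨y, rfl⟩)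

lemma coll_cons {act : S → A → S} {w : List A} (h : coll act w) (b : A) :
    coll act (b :: w) := by
  rintro a ⟨x, rfl⟩ c ⟨y, rfl⟩
  simp only [List.foldl_cons]
  exact h ⟨_, rfl⟩ ⟨_, rfl⟩

lemma coll_append_left {act : S → A → S} {u : List A}
    (hu : ∀ x y : S, u.foldl act x = u.foldl act y) (w : List A) :
    coll act (w ++ u) := by
  rintro a ⟨x, rfl⟩ b ⟨y, rfl⟩
  simp only [List.foldl_append]
  exact hu _ _

lemma range_rev_map (n : ℕ) (v : ℕ → A) :
    (List.range n).reverse.map v = List.ofFn (fun i : Fin n => v (Fin.rev i)) := by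
  apply List.ext_getElem
  · simp
  · intro i h1 h2
    simp only [List.getElem_map, List.getElem_reverse, List.getElem_range, List.getElem_ofFn]
    congr 1
    simp only [List.length_map, List.length_reverse, List.length_range] at h1
    simp [Fin.rev]
    omega

lemma backSet_anti (act : S → A → S) (v : ℕ → A) {i j : ℕ} (h : i ≤ j) :
    backSet act v j ⊆ backSet act v i := by
  induction j with
  | zero => simp [Nat.le_zero.mp h]
  | succ n ih =>
    rcases Nat.eq_or_lt_of_le h with rfl | h'
    · exact subset_rfl
    · refine (fun y hy => ih (Nat.lt_succ_iff.mp h') ?_)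
      obtain ⟨x, rfl⟩ := hy
      refine ⟨act x (v n), ?_⟩
      have : (List.range (n+1)).reverse.map v = v n :: (List.range n).reverse.map v := by
        rw [List.range_succ]; simp
      rw [this]
      simp [List.foldl_cons]

lemma backSet_sub_mono (act : S → A → S) (v : ℕ → A) {i j : ℕ} (h : i ≤ j)
    (hs : (backSet act v i).Subsingleton) : (backSet act v j).Subsingleton :=
  hs.anti (backSet_anti act v h)

lemma fwdSet_succ (act : S → A → S) (v : ℕ → A) (n : ℕ) :
    fwdSet act v (n+1) = (fun s => act s (v n)) '' fwdSet act v n := by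
  unfold fwdSet
  rw [List.ofFn_succ']
  ext y
  constructor
  · rintro ⟨x, rfl⟩
    exact ⟨_, ⟨x, rfl⟩, by simp [List.concat_eq_append, List.foldl_append]⟩
  · rintro ⟨z, ⟨x, rfl⟩, rfl⟩
    exact ⟨x, by simp [List.concat_eq_append, List.foldl_append]⟩

lemma fwdSet_sub_mono (act : S → A → S) (v : ℕ → A) {i j : ℕ} (h : i ≤ j)
    (hs : (fwdSet act v i).Subsingleton) : (fwdSet act v j).Subsingleton := by
  induction j with
  | zero => simpa [Nat.le_zero.mp h] using hs
  | succ n ih =>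
    rcases Nat.eq_or_lt_of_le h with rfl | h'
    · exact hs
    · rw [fwdSet_succ]
      exact (ih (Nat.lt_succ_iff.mp h')).image _

/-- The backward word predicate. -/
def Pb (act : S → A → S) (n : ℕ) (a : Fin n → A) : Prop :=
  coll act (List.ofFn fun i : Fin n => a (Fin.rev i))

/-- The forward word predicate. -/
def Pf (act : S → A → S) (n : ℕ) (a : Fin n → A) : Prop :=
  coll act (List.ofFn a)

lemma pb_step {act : S → A → S} {n : ℕ} (a : Fin (n+1) → A)
    (h : Pb act n fun i => a i.castSucc) : Pb act (n+1) a := by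
  unfold Pb at h ⊢
  rw [List.ofFn_succ]
  have e : (fun i : Fin n => a (Fin.rev (Fin.succ i)))
      = fun i : Fin n => a (Fin.castSucc (Fin.rev i)) :=
    funext fun i => by rw [Fin.rev_succ]
  rw [show (List.ofFn fun i : Fin n => a (Fin.rev (Fin.succ i)))
      = List.ofFn fun i : Fin n => a (Fin.castSucc (Fin.rev i)) from congrArg List.ofFn e]
  exact coll_cons h _

lemma pf_step {act : S → A → S} {n : ℕ} (a : Fin (n+1) → A)
    (h : Pf act n fun i => a i.castSucc) : Pf act (n+1) a := by
  unfold Pf at h ⊢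
  rw [List.ofFn_succ', List.concat_eq_append]
  exact coll_append_right h _

section Fintypes

variable [Fintype S] [Fintype A]

lemma sum_rev {M : Type} [AddCommMonoid M] (n : ℕ) (F : (Fin n → A) → M) :
    ∑ a : Fin n → A, F (fun i => a (Fin.rev i)) = ∑ a : Fin n → A, F a := by
  apply Fintype.sum_equiv (Equiv.arrowCongr (Fin.revPerm) (Equiv.refl A))
  intro a
  congr

lemma prod_rev (n : ℕ) (D : A → ENNReal) (a : Fin n → A) :
    ∏ i, D (a (Fin.rev i)) = ∏ i, D (a i) :=
  Equiv.prod_comp Fin.revPerm (fun i => D (a i))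

lemma sum_prod_D (D : A → ENNReal) (hDsum : ∑ a, D a = 1) (k : ℕ) :
    ∑ a : Fin k → A, ∏ i, D (a i) = 1 := by
  rw [← Fintype.piFinset_univ, ← Finset.prod_univ_sum]
  simp [hDsum]

/-- The `n`-step transition kernel of the chain. -/
noncomputable def q (act : S → A → S) (D : A → ENNReal) (n : ℕ) (x y : S) : ENNReal :=
  ∑ a : Fin n → A, if (List.ofFn a).foldl act x = y then ∏ i, D (a i) else 0

lemma q_zero (act : S → A → S) (D : A → ENNReal) (x y : S) :
    q act D 0 x y = if x = y then 1 else 0 := by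
  unfold q
  rw [Fintype.sum_unique]
  simp

lemma q_succ (act : S → A → S) (D : A → ENNReal) (n : ℕ) (x y : S) :
    q act D (n+1) x y = ∑ b : A, D b * q act D n (act x b) y := by
  unfold q
  rw [← Equiv.sum_comp (Fin.consEquiv fun _ : Fin (n+1) => A)
    (fun a => if (List.ofFn a).foldl act x = y then ∏ i, D (a i) else 0)]
  simp only [Fin.consEquiv_apply]
  rw [Fintype.sum_prod_type]
  refine Finset.sum_congr rfl fun b _ => ?_
  rw [Finset.mul_sum]
  refine Finset.sum_congr rfl fun c _ => ?_
  rw [List.ofFn_succ]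
  simp only [Fin.cons_zero, Fin.cons_succ, List.foldl_cons, Fin.prod_univ_succ]
  by_cases h : (List.ofFn c).foldl act (act x b) = y <;> simp [h, mul_comm]

lemma q_stat (act : S → A → S) (D : A → ENNReal) (π : S → ENNReal)
    (hstat : ∀ y, ∑ x, π x * (∑ a, if act x a = y then D a else 0) = π y)
    (n : ℕ) (y : S) : ∑ x, π x * q act D n x y = π y := by
  induction n with
  | zero =>
    simp only [q_zero, mul_ite, mul_one, mul_zero]
    simp
  | succ n ih =>
    calc ∑ x, π x * q act D (n+1) x y
        = ∑ x, ∑ b, π x * D b * q act D n (act x b) y := by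
          refine Finset.sum_congr rfl fun x _ => ?_
          rw [q_succ, Finset.mul_sum]
          exact Finset.sum_congr rfl fun b _ => by ring
      _ = ∑ x, ∑ b, ∑ z, (if act x b = z then π x * D b * q act D n z y else 0) := by
          refine Finset.sum_congr rfl fun x _ => Finset.sum_congr rfl fun b _ => ?_
          rw [Finset.sum_ite_eq Finset.univ (act x b) (fun z => π x * D b * q act D n z y)]
          simp
      _ = ∑ z, ∑ x, ∑ b, (if act x b = z then π x * D b * q act D n z y else 0) :=
          (Finset.sum_congr rfl fun x _ => Finset.sum_comm).trans Finset.sum_comm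
      _ = ∑ z, (∑ x, π x * ∑ b, if act x b = z then D b else 0) * q act D n z y := by
          refine Finset.sum_congr rfl fun z _ => ?_
          rw [Finset.sum_mul]
          refine Finset.sum_congr rfl fun x _ => ?_
          rw [Finset.mul_sum, Finset.sum_mul]
          refine Finset.sum_congr rfl fun b _ => ?_
          by_cases h : act x b = z <;> simp [h]
      _ = ∑ z, π z * q act D n z y :=
          Finset.sum_congr rfl fun z _ => by rw [hstat z]
      _ = π y := ih

/-- Probability that the grand coupling has not coalesced after reading `n` letters. -/
noncomputable def rr (act : S → A → S) (D : A → ENNReal) (n : ℕ) : ENNReal :=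
  ∑ a : Fin n → A, if ¬ coll act (List.ofFn a) then ∏ i, D (a i) else 0

/-- Probability that a block of letters differs from the coupling word `u`. -/
noncomputable def sU (D : A → ENNReal) (u : List A) : ENNReal :=
  ∑ c : Fin u.length → A, if List.ofFn c ≠ u then ∏ i, D (c i) else 0

lemma sU_add (D : A → ENNReal) (hDsum : ∑ a, D a = 1) (u : List A) :
    sU D u + ∏ i : Fin u.length, D (u.get i) = 1 := by
  have h2 : (∑ c : Fin u.length → A, if List.ofFn c = u then ∏ i, D (c i) else 0)
      = ∏ i : Fin u.length, D (u.get i) := by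
    rw [Finset.sum_eq_single u.get]
    · simp [List.ofFn_get]
    · intro c _ hc
      have : List.ofFn c ≠ u := by
        intro h
        apply hc
        apply List.ofFn_injective
        rw [h, List.ofFn_get]
      simp [this]
    · simp
  unfold sU
  rw [← h2, ← Finset.sum_add_distrib, ← sum_prod_D D hDsum u.length]
  refine Finset.sum_congr rfl fun c _ => ?_
  by_cases h : List.ofFn c = u <;> simp [h]

lemma sU_lt_one (D : A → ENNReal) (hDsum : ∑ a, D a = 1) (hDpos : ∀ a, 0 < D a)
    (u : List A) : sU D u < 1 := by
  have hadd := sU_add D hDsum u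
  have hp : 0 < ∏ i : Fin u.length, D (u.get i) := by
    rw [CanonicallyOrderedAdd.prod_pos]
    exact fun i _ => hDpos _
  have hle : sU D u ≤ 1 := le_of_le_of_eq (le_add_right le_rfl) hadd
  rcases lt_or_eq_of_le hle with h | h
  · exact h
  · exfalso
    rw [h] at hadd
    have h10 : (1:ENNReal) + ∏ i : Fin u.length, D (u.get i) = 1 + 0 := by rw [hadd, add_zero]
    have : ∏ i : Fin u.length, D (u.get i) = 0 :=
      (ENNReal.add_right_inj ENNReal.one_ne_top).mp h10
    exact absurd this (ne_of_gt hp)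

lemma rr_add_le (act : S → A → S) (D : A → ENNReal) {u : List A}
    (hu : ∀ x y : S, u.foldl act x = u.foldl act y) (n : ℕ) :
    rr act D (n + u.length) ≤ rr act D n * sU D u := by
  classical
  set L := u.length
  let e : ((Fin n → A) × (Fin L → A)) ≃ (Fin (n + L) → A) :=
    (Equiv.sumArrowEquivProdArrow (Fin n) (Fin L) A).symm.trans
      (Equiv.arrowCongr finSumFinEquiv (Equiv.refl A))
  have he1 : ∀ (p : (Fin n → A) × (Fin L → A)) (i : Fin n), e p (Fin.castAdd L i) = p.1 i := by
    intro p i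
    simp [e, Equiv.sumArrowEquivProdArrow, finSumFinEquiv_symm_apply_castAdd]
  have he2 : ∀ (p : (Fin n → A) × (Fin L → A)) (j : Fin L), e p (Fin.natAdd n j) = p.2 j := by
    intro p j
    simp [e, Equiv.sumArrowEquivProdArrow, finSumFinEquiv_symm_apply_natAdd]
  have hofFn : ∀ p : (Fin n → A) × (Fin L → A),
      List.ofFn (e p) = List.ofFn p.1 ++ List.ofFn p.2 := by
    intro p
    rw [List.ofFn_add]
    congr 1
    · exact congrArg List.ofFn (funext (he1 p))
    · exact congrArg List.ofFn (funext (he2 p))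
  have hprod : ∀ p : (Fin n → A) × (Fin L → A),
      ∏ i, D (e p i) = (∏ i, D (p.1 i)) * ∏ j, D (p.2 j) := by
    intro p
    rw [Fin.prod_univ_add]
    congr 1
    · exact Finset.prod_congr rfl fun i _ => by rw [he1]
    · exact Finset.prod_congr rfl fun j _ => by rw [he2]
  unfold rr
  rw [← Equiv.sum_comp e (fun a => if ¬ coll act (List.ofFn a) then ∏ i, D (a i) else 0)]
  unfold sU
  rw [Finset.sum_mul_sum]
  rw [Fintype.sum_prod_type]
  refine Finset.sum_le_sum fun b _ => Finset.sum_le_sum fun c _ => ?_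
  rw [hofFn (b, c), hprod (b, c)]
  by_cases h1 : coll act (List.ofFn b)
  · simp [coll_append_right h1]
  · by_cases h2 : List.ofFn c = u
    · have hcoll : coll act (List.ofFn b ++ List.ofFn c) := by
        rw [h2]; exact coll_append_left hu _
      simp [hcoll]
    · simp [h1, h2]
      by_cases h3 : coll act (List.ofFn b ++ List.ofFn c) <;> simp [h3] <;> exact le_rfl

lemma rr_le_pow (act : S → A → S) (D : A → ENNReal) {u : List A}
    (hu : ∀ x y : S, u.foldl act x = u.foldl act y) (m : ℕ) :
    rr act D (m * u.length) ≤ (sU D u) ^ m := by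
  induction m with
  | zero =>
    simp only [Nat.zero_mul, pow_zero]
    unfold rr
    rw [Fintype.sum_unique]
    split <;> simp
  | succ m ih =>
    have h : (m + 1) * u.length = m * u.length + u.length := by ring
    rw [h, pow_succ]
    exact le_trans (rr_add_le act D hu _) (mul_le_mul_left ih _)

end Fintypes

section Meas

variable [Fintype A] {Ω : Type} [MeasurableSpace Ω]

lemma meas_ev_pair (μ : Measure Ω) [IsProbabilityMeasure μ] (D : A → ENNReal)
    (hDsum : ∑ a, D a = 1) (U : ℕ → Ω → A)
    (hiid : ∀ (k : ℕ) (a : Fin k → A),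
      μ {ω | ∀ i : Fin k, U (i : ℕ) ω = a i} = ∏ i, D (a i))
    (k : ℕ) (P : (Fin k → A) → Prop) :
    μ {ω | P fun i : Fin k => U (i : ℕ) ω} = (∑ a : Fin k → A, if P a then ∏ i, D (a i) else 0)
    ∧ μ ({ω | P fun i : Fin k => U (i : ℕ) ω}ᶜ)
      = ∑ a : Fin k → A, if P a then 0 else ∏ i, D (a i) := by
  have key : ∀ Q : (Fin k → A) → Prop,
      μ {ω | Q fun i : Fin k => U (i : ℕ) ω}
        ≤ ∑ a : Fin k → A, if Q a then ∏ i, D (a i) else 0 := by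
    intro Q
    have hsub : {ω | Q fun i : Fin k => U (i : ℕ) ω} ⊆
        ⋃ a ∈ Finset.univ.filter Q, {ω | ∀ i : Fin k, U (i : ℕ) ω = a i} := by
      intro ω hω
      refine Set.mem_biUnion (Finset.mem_filter.mpr ⟨Finset.mem_univ _, hω⟩) (fun i => rfl)
    calc μ {ω | Q fun i : Fin k => U (i : ℕ) ω}
        ≤ μ (⋃ a ∈ Finset.univ.filter Q, {ω | ∀ i : Fin k, U (i : ℕ) ω = a i}) :=
          measure_mono hsub
      _ ≤ ∑ a ∈ Finset.univ.filter Q, μ {ω | ∀ i : Fin k, U (i : ℕ) ω = a i} :=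
          measure_biUnion_finset_le _ _
      _ = ∑ a ∈ Finset.univ.filter Q, ∏ i, D (a i) := Finset.sum_congr rfl fun a _ => hiid k a
      _ = ∑ a : Fin k → A, if Q a then ∏ i, D (a i) else 0 := by rw [Finset.sum_filter]
  have h1 := key P
  have h2 : μ ({ω | P fun i : Fin k => U (i : ℕ) ω}ᶜ)
      ≤ ∑ a : Fin k → A, if P a then 0 else ∏ i, D (a i) := by
    have e : (∑ a : Fin k → A, if P a then (0:ENNReal) else ∏ i, D (a i))
        = ∑ a : Fin k → A, if ¬ P a then ∏ i, D (a i) else 0 :=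
      Finset.sum_congr rfl fun a _ => by by_cases h : P a <;> simp [h]
    rw [Set.compl_setOf, e]
    have := key (fun a => ¬ P a)
    convert this using 3
  have hsum2 : (∑ a : Fin k → A, if P a then ∏ i, D (a i) else 0)
      + (∑ a : Fin k → A, if P a then 0 else ∏ i, D (a i)) = 1 := by
    rw [← Finset.sum_add_distrib, ← sum_prod_D D hDsum k]
    refine Finset.sum_congr rfl fun a _ => ?_
    by_cases h : P a <;> simp [h]
  have htot : (1 : ENNReal) ≤ μ {ω | P fun i : Fin k => U (i : ℕ) ω}
      + μ {ω | P fun i : Fin k => U (i : ℕ) ω}ᶜ := by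
    have h := measure_union_le (μ := μ) {ω | P fun i : Fin k => U (i : ℕ) ω}
      {ω | P fun i : Fin k => U (i : ℕ) ω}ᶜ
    rwa [Set.union_compl_self, measure_univ] at h
  have hne1 : (∑ a : Fin k → A, if P a then ∏ i, D (a i) else 0) ≠ ⊤ := by
    intro h; rw [h] at hsum2; simp at hsum2
  have hne2 : (∑ a : Fin k → A, if P a then 0 else ∏ i, D (a i)) ≠ ⊤ := by
    intro h; rw [h] at hsum2; simp at hsum2
  constructor
  · refine le_antisymm h1 ?_
    rw [← ENNReal.add_le_add_iff_right hne2, hsum2]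
    exact le_trans htot (add_le_add_right h2 _)
  · refine le_antisymm h2 ?_
    rw [← ENNReal.add_le_add_iff_left hne1, hsum2]
    exact le_trans htot (add_le_add_left h1 _)

lemma nullMeasurableSet_of_compl (μ : Measure Ω) [IsProbabilityMeasure μ] (s : Set Ω)
    (h : μ s + μ sᶜ ≤ 1) : NullMeasurableSet s μ := by
  set t := toMeasurable μ s with ht
  set t' := toMeasurable μ sᶜ with ht'
  have hts : s ⊆ t := subset_toMeasurable μ s
  have hts' : sᶜ ⊆ t' := subset_toMeasurable μ sᶜ
  have huniv : t ∪ t' = Set.univ := by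
    apply Set.eq_univ_of_univ_subset
    intro x _
    by_cases hx : x ∈ s
    · exact Or.inl (hts hx)
    · exact Or.inr (hts' hx)
  have hinter : μ (t ∩ t') = 0 := by
    have hiu : μ (t ∪ t') + μ (t ∩ t') = μ t + μ t' :=
      measure_union_add_inter t (measurableSet_toMeasurable μ sᶜ)
    rw [huniv, measure_univ, measure_toMeasurable, measure_toMeasurable] at hiu
    have h0 : (1:ENNReal) + μ (t ∩ t') ≤ 1 + 0 := by
      rw [add_zero, hiu]; exact h
    simpa using (ENNReal.add_le_add_iff_left (by simp)).mp h0
  have hdiff : μ (t \ s) = 0 := by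
    refine measure_mono_null (fun x hx => ?_) hinter
    exact ⟨hx.1, hts' hx.2⟩
  have haeq : t =ᵐ[μ] s := by
    rw [MeasureTheory.ae_eq_set]
    exact ⟨hdiff, by rw [Set.diff_eq_empty.mpr hts]; simp⟩
  exact ((measurableSet_toMeasurable μ s).nullMeasurableSet).congr haeq

lemma ev_nullMeasurableSet (μ : Measure Ω) [IsProbabilityMeasure μ] (D : A → ENNReal)
    (hDsum : ∑ a, D a = 1) (U : ℕ → Ω → A)
    (hiid : ∀ (k : ℕ) (a : Fin k → A),
      μ {ω | ∀ i : Fin k, U (i : ℕ) ω = a i} = ∏ i, D (a i))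
    (k : ℕ) (P : (Fin k → A) → Prop) :
    NullMeasurableSet {ω | P fun i : Fin k => U (i : ℕ) ω} μ := by
  obtain ⟨e1, e2⟩ := meas_ev_pair μ D hDsum U hiid k P
  apply nullMeasurableSet_of_compl
  rw [e1, e2]
  rw [← Finset.sum_add_distrib, ← sum_prod_D D hDsum k]
  refine le_of_eq (Finset.sum_congr rfl fun a _ => ?_)
  by_cases h : P a <;> simp [h]

end Meas

lemma sInf_eq_zero_iff {s : Set ℕ} (hne : s.Nonempty) : sInf s = 0 ↔ 0 ∈ s := by
  rw [Nat.sInf_eq_zero]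
  constructor
  · rintro (h | h)
    · exact h
    · exact absurd h (Set.nonempty_iff_ne_empty.mp hne)
  · exact Or.inl

lemma sInf_eq_succ_iff {s : Set ℕ} (hne : s.Nonempty)
    (hup : ∀ {i j : ℕ}, i ∈ s → i ≤ j → j ∈ s) (n : ℕ) :
    sInf s = n + 1 ↔ (n + 1 ∈ s ∧ n ∉ s) := by
  constructor
  · intro h
    refine ⟨h ▸ Nat.sInf_mem hne, fun hn => ?_⟩
    have := Nat.sInf_le hn
    omega
  · rintro ⟨h1, h2⟩
    have hle := Nat.sInf_le h1
    have hgt : ¬ sInf s ≤ n := fun hle' => h2 (hup (Nat.sInf_mem hne) hle')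
    omega

end CFTP

end CFTPAux

/-- in CFTP, the unique element of `S_{τ^b}` is distributed according to
the stationary distribution `π` of the transition matrix `M(x,y) = Σ_{a : x·a = y} D(a)`,
and the backward coupling time `τ^b` has the same distribution as the forward coupling
time `τ` of the grand coupling. -/
theorem stmt2 {S A : Type} [Fintype S] [Nonempty S] [MeasurableSpace S]
    [MeasurableSingletonClass S] [Fintype A]
    (D : A → ENNReal) (hDsum : ∑ a, D a = 1) (hDpos : ∀ a, 0 < D a)
    (act : S → A → S)
    (hcouple : ∃ u : List A, ∀ x y : S, u.foldl act x = u.foldl act y)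
    (π : S → ENNReal) (hπsum : ∑ x, π x = 1)
    (hstat : ∀ y, ∑ x, π x * (∑ a, if act x a = y then D a else 0) = π y)
    {Ω : Type} [MeasurableSpace Ω] (μ : Measure Ω) [IsProbabilityMeasure μ]
    (U : ℕ → Ω → A)
    (hiid : ∀ (k : ℕ) (a : Fin k → A),
      μ {ω | ∀ i : Fin k, U (i : ℕ) ω = a i} = ∏ i, D (a i))
    (out : Ω → S)
    (hout : ∀ ω, out ω ∈
      backSet act (fun k => U k ω)
        (sInf {i | (backSet act (fun k => U k ω) i).Subsingleton})) :
    (∀ x : S, μ {ω | out ω = x} = π x) ∧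
    μ.map (fun ω => sInf {i | (backSet act (fun k => U k ω) i).Subsingleton})
      = μ.map (fun ω => sInf {i | (fwdSet act (fun k => U k ω) i).Subsingleton}) := by
  classical
  obtain ⟨u, hu⟩ := hcouple
  have hpair := CFTP.meas_ev_pair μ D hDsum U hiid
  -- identification of the backward/forward events
  have hbiff : ∀ (ω : Ω) (n : ℕ), (backSet act (fun k => U k ω) n).Subsingleton
      ↔ CFTP.Pb act n (fun i : Fin n => U (i:ℕ) ω) := by
    intro ω n
    show CFTP.coll act ((List.range n).reverse.map (fun k => U k ω)) ↔ _
    rw [CFTP.range_rev_map n (fun k => U k ω)]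
    exact Iff.rfl
  set Eb : ℕ → Set Ω := fun n => {ω | (backSet act (fun k => U k ω) n).Subsingleton} with hEbdef
  set Ef : ℕ → Set Ω := fun n => {ω | (fwdSet act (fun k => U k ω) n).Subsingleton} with hEfdef
  have hEbP : ∀ n, Eb n = {ω | CFTP.Pb act n fun i : Fin n => U (i:ℕ) ω} :=
    fun n => Set.ext fun ω => hbiff ω n
  have hEfP : ∀ n, Ef n = {ω | CFTP.Pf act n fun i : Fin n => U (i:ℕ) ω} :=
    fun n => Set.ext fun ω => Iff.rfl
  have hEb : ∀ n, μ (Eb n) = ∑ a : Fin n → A, if CFTP.Pb act n a then ∏ i, D (a i) else 0 :=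
    fun n => by rw [hEbP n]; exact (hpair n (CFTP.Pb act n)).1
  have hEbc : ∀ n, μ ((Eb n)ᶜ) = ∑ a : Fin n → A, if CFTP.Pb act n a then 0 else ∏ i, D (a i) :=
    fun n => by rw [hEbP n]; exact (hpair n (CFTP.Pb act n)).2
  have hEf : ∀ n, μ (Ef n) = ∑ a : Fin n → A, if CFTP.Pf act n a then ∏ i, D (a i) else 0 :=
    fun n => by rw [hEfP n]; exact (hpair n (CFTP.Pf act n)).1
  have hEfc : ∀ n, μ ((Ef n)ᶜ) = ∑ a : Fin n → A, if CFTP.Pf act n a then 0 else ∏ i, D (a i) :=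
    fun n => by rw [hEfP n]; exact (hpair n (CFTP.Pf act n)).2
  -- transfer between backward and forward sums by reversing words
  have hbf : ∀ n, (∑ a : Fin n → A, if CFTP.Pb act n a then ∏ i, D (a i) else 0)
      = ∑ a : Fin n → A, if CFTP.Pf act n a then ∏ i, D (a i) else 0 := by
    intro n
    rw [← CFTP.sum_rev n (fun a : Fin n → A => if CFTP.Pf act n a then ∏ i, D (a i) else 0)]
    refine Finset.sum_congr rfl fun a _ => ?_
    rw [CFTP.prod_rev n D a]
    have hc : CFTP.Pf act n (fun i => a (Fin.rev i)) ↔ CFTP.Pb act n a := Iff.rfl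
    by_cases h : CFTP.Pb act n a <;> simp [h, hc]
  have hbf0 : ∀ n, (∑ a : Fin n → A, if CFTP.Pb act n a then 0 else ∏ i, D (a i))
      = ∑ a : Fin n → A, if CFTP.Pf act n a then 0 else ∏ i, D (a i) := by
    intro n
    rw [← CFTP.sum_rev n (fun a : Fin n → A => if CFTP.Pf act n a then 0 else ∏ i, D (a i))]
    refine Finset.sum_congr rfl fun a _ => ?_
    rw [CFTP.prod_rev n D a]
    have hc : CFTP.Pf act n (fun i => a (Fin.rev i)) ↔ CFTP.Pb act n a := Iff.rfl
    by_cases h : CFTP.Pb act n a <;> simp [h, hc]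
  have hEbEf : ∀ n, μ (Eb n) = μ (Ef n) := fun n => by rw [hEb n, hEf n, hbf n]
  have hEfc_rr : ∀ n, μ ((Ef n)ᶜ) = CFTP.rr act D n := by
    intro n
    rw [hEfc n]
    unfold CFTP.rr
    refine Finset.sum_congr rfl fun a _ => ?_
    by_cases h : CFTP.coll act (List.ofFn a)
    · rw [if_pos (show CFTP.Pf act n a from h),
        if_neg (not_not_intro h)]
    · rw [if_neg (show ¬ CFTP.Pf act n a from h), if_pos h]
  have hEbc_rr : ∀ n, μ ((Eb n)ᶜ) = CFTP.rr act D n := fun n => by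
    rw [hEbc n, hbf0 n, ← hEfc n, hEfc_rr n]
  have hEbc_bound : ∀ m, μ ((Eb (m * u.length))ᶜ) ≤ CFTP.sU D u ^ m := fun m => by
    rw [hEbc_rr]; exact CFTP.rr_le_pow act D hu m
  have hten : Filter.Tendsto (fun m : ℕ => CFTP.sU D u ^ m) Filter.atTop (nhds 0) :=
    ENNReal.tendsto_pow_atTop_nhds_zero_of_lt_one (CFTP.sU_lt_one D hDsum hDpos u)
  -- the n-step backward evolution started at x
  have hF : ∀ (n : ℕ) (x y : S),
      μ {ω | ((List.range n).reverse.map fun k => U k ω).foldl act x = y}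
        = CFTP.q act D n x y := by
    intro n x y
    have hset : {ω | ((List.range n).reverse.map fun k => U k ω).foldl act x = y}
        = {ω | (fun a : Fin n → A =>
            (List.ofFn fun i : Fin n => a (Fin.rev i)).foldl act x = y)
            (fun i : Fin n => U (i:ℕ) ω)} := by
      refine Set.ext fun ω => ?_
      rw [Set.mem_setOf_eq, Set.mem_setOf_eq, CFTP.range_rev_map n (fun k => U k ω)]
    rw [hset, (hpair n (fun a : Fin n → A =>
      (List.ofFn fun i : Fin n => a (Fin.rev i)).foldl act x = y)).1]
    unfold CFTP.q
    rw [← CFTP.sum_rev n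
      (fun a : Fin n → A => if (List.ofFn a).foldl act x = y then ∏ i, D (a i) else 0)]
    refine Finset.sum_congr rfl fun a _ => ?_
    rw [CFTP.prod_rev n D a]
  -- on the coalescence event, the backward evolution from any state equals `out`
  have hkey : ∀ (n : ℕ) (x : S) (ω : Ω), ω ∈ Eb n →
      ((List.range n).reverse.map fun k => U k ω).foldl act x = out ω := by
    intro n x ω hω
    have hn : n ∈ {i | (backSet act (fun k => U k ω) i).Subsingleton} := hω
    have hne : {i | (backSet act (fun k => U k ω) i).Subsingleton}.Nonempty := ⟨n, hn⟩
    have hmem := Nat.sInf_mem hne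
    have hle : sInf {i | (backSet act (fun k => U k ω) i).Subsingleton} ≤ n := Nat.sInf_le hn
    have hsub : backSet act (fun k => U k ω) n ⊆
        backSet act (fun k => U k ω) (sInf {i | (backSet act (fun k => U k ω) i).Subsingleton}) :=
      CFTP.backSet_anti act _ hle
    have h1 : ((List.range n).reverse.map fun k => U k ω).foldl act x
        ∈ backSet act (fun k => U k ω) n := ⟨x, rfl⟩
    exact hmem (hsub h1) (hout ω)
  -- Part 1
  have hone : ∀ y : S, μ {ω | out ω = y} = π y := by
    intro y
    have hub : ∀ m : ℕ, μ {ω | out ω = y} ≤ π y + CFTP.sU D u ^ m := by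
      intro m
      have hx : ∀ x : S, μ {ω | out ω = y}
          ≤ CFTP.q act D (m * u.length) x y + CFTP.sU D u ^ m := by
        intro x
        have hsub : {ω | out ω = y} ⊆
            {ω | ((List.range (m * u.length)).reverse.map fun k => U k ω).foldl act x = y}
              ∪ (Eb (m * u.length))ᶜ := by
          intro ω hω
          by_cases hEbn : ω ∈ Eb (m * u.length)
          · exact Or.inl (by rw [Set.mem_setOf_eq, hkey (m * u.length) x ω hEbn]; exact hω)
          · exact Or.inr hEbn
        calc μ {ω | out ω = y} ≤ μ ({ω | ((List.range (m * u.length)).reverse.map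
                fun k => U k ω).foldl act x = y} ∪ (Eb (m * u.length))ᶜ) := measure_mono hsub
          _ ≤ μ {ω | ((List.range (m * u.length)).reverse.map fun k => U k ω).foldl act x = y}
              + μ ((Eb (m * u.length))ᶜ) := measure_union_le _ _
          _ ≤ CFTP.q act D (m * u.length) x y + CFTP.sU D u ^ m :=
              add_le_add (le_of_eq (hF (m * u.length) x y)) (hEbc_bound m)
      calc μ {ω | out ω = y} = ∑ x, π x * μ {ω | out ω = y} := by
            rw [← Finset.sum_mul, hπsum, one_mul]
        _ ≤ ∑ x, π x * (CFTP.q act D (m * u.length) x y + CFTP.sU D u ^ m) :=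
            Finset.sum_le_sum fun x _ => mul_le_mul_right (hx x) _
        _ = (∑ x, π x * CFTP.q act D (m * u.length) x y) + ∑ x, π x * CFTP.sU D u ^ m := by
            rw [← Finset.sum_add_distrib]
            exact Finset.sum_congr rfl fun x _ => mul_add _ _ _
        _ = π y + CFTP.sU D u ^ m := by
            rw [CFTP.q_stat act D π hstat (m * u.length) y, ← Finset.sum_mul, hπsum, one_mul]
    have hlb : ∀ m : ℕ, π y ≤ μ {ω | out ω = y} + CFTP.sU D u ^ m := by
      intro m
      have hx : ∀ x : S, CFTP.q act D (m * u.length) x y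
          ≤ μ {ω | out ω = y} + CFTP.sU D u ^ m := by
        intro x
        rw [← hF (m * u.length) x y]
        have hsub : {ω | ((List.range (m * u.length)).reverse.map fun k => U k ω).foldl act x = y}
            ⊆ {ω | out ω = y} ∪ (Eb (m * u.length))ᶜ := by
          intro ω hω
          by_cases hEbn : ω ∈ Eb (m * u.length)
          · refine Or.inl ?_
            rw [Set.mem_setOf_eq, ← hkey (m * u.length) x ω hEbn]
            exact hω
          · exact Or.inr hEbn
        calc μ {ω | ((List.range (m * u.length)).reverse.map fun k => U k ω).foldl act x = y}
            ≤ μ ({ω | out ω = y} ∪ (Eb (m * u.length))ᶜ) := measure_mono hsub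
          _ ≤ μ {ω | out ω = y} + μ ((Eb (m * u.length))ᶜ) := measure_union_le _ _
          _ ≤ μ {ω | out ω = y} + CFTP.sU D u ^ m := add_le_add_right (hEbc_bound m) _
      calc π y = ∑ x, π x * CFTP.q act D (m * u.length) x y :=
            (CFTP.q_stat act D π hstat (m * u.length) y).symm
        _ ≤ ∑ x, π x * (μ {ω | out ω = y} + CFTP.sU D u ^ m) :=
            Finset.sum_le_sum fun x _ => mul_le_mul_right (hx x) _
        _ = μ {ω | out ω = y} + CFTP.sU D u ^ m := by
            rw [← Finset.sum_mul, hπsum, one_mul]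
    refine le_antisymm ?_ ?_
    · exact ge_of_tendsto' (by simpa using Filter.Tendsto.const_add (π y) hten) hub
    · exact ge_of_tendsto'
        (by simpa using Filter.Tendsto.const_add (μ {ω | out ω = y}) hten) hlb
  refine ⟨hone, ?_⟩
  -- Part 2: the two coupling times have the same distribution
  have hN : μ (⋂ n, (Eb n)ᶜ) = 0 := by
    refine le_antisymm ?_ zero_le
    refine ge_of_tendsto' hten (fun m => ?_)
    exact le_trans (measure_mono (Set.iInter_subset _ (m * u.length))) (hEbc_bound m)
  have hEfc_bound : ∀ m, μ ((Ef (m * u.length))ᶜ) ≤ CFTP.sU D u ^ m := fun m => by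
    rw [hEfc_rr]; exact CFTP.rr_le_pow act D hu m
  have hN' : μ (⋂ n, (Ef n)ᶜ) = 0 := by
    refine le_antisymm ?_ zero_le
    refine ge_of_tendsto' hten (fun m => ?_)
    exact le_trans (measure_mono (Set.iInter_subset _ (m * u.length))) (hEfc_bound m)
  set τb : Ω → ℕ := fun ω => sInf {i | (backSet act (fun k => U k ω) i).Subsingleton} with hτb
  set τf : Ω → ℕ := fun ω => sInf {i | (fwdSet act (fun k => U k ω) i).Subsingleton} with hτf
  let Gb : ℕ → Set Ω := fun n => match n with
    | 0 => Eb 0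
    | (n+1) => Eb (n+1) ∩ (Eb n)ᶜ
  let Gf : ℕ → Set Ω := fun n => match n with
    | 0 => Ef 0
    | (n+1) => Ef (n+1) ∩ (Ef n)ᶜ
  have hcharb : ∀ ω, ω ∉ (⋂ k, (Eb k)ᶜ) → ∀ n, (τb ω = n ↔ ω ∈ Gb n) := by
    intro ω hω n
    have hne : {i | (backSet act (fun k => U k ω) i).Subsingleton}.Nonempty := by
      by_contra hc
      apply hω
      refine Set.mem_iInter.mpr fun k hk => ?_
      exact hc ⟨k, hk⟩
    have hup : ∀ {i j : ℕ}, i ∈ {i | (backSet act (fun k => U k ω) i).Subsingleton} → i ≤ j →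
        j ∈ {i | (backSet act (fun k => U k ω) i).Subsingleton} :=
      fun hi hij => CFTP.backSet_sub_mono act _ hij hi
    cases n with
    | zero =>
      show τb ω = 0 ↔ ω ∈ Eb 0
      rw [hτb]
      exact CFTP.sInf_eq_zero_iff hne
    | succ n =>
      show τb ω = n + 1 ↔ ω ∈ Eb (n+1) ∩ (Eb n)ᶜ
      rw [hτb]
      exact CFTP.sInf_eq_succ_iff hne hup n
  have hcharf : ∀ ω, ω ∉ (⋂ k, (Ef k)ᶜ) → ∀ n, (τf ω = n ↔ ω ∈ Gf n) := by
    intro ω hω n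
    have hne : {i | (fwdSet act (fun k => U k ω) i).Subsingleton}.Nonempty := by
      by_contra hc
      apply hω
      refine Set.mem_iInter.mpr fun k hk => ?_
      exact hc ⟨k, hk⟩
    have hup : ∀ {i j : ℕ}, i ∈ {i | (fwdSet act (fun k => U k ω) i).Subsingleton} → i ≤ j →
        j ∈ {i | (fwdSet act (fun k => U k ω) i).Subsingleton} :=
      fun hi hij => CFTP.fwdSet_sub_mono act _ hij hi
    cases n with
    | zero =>
      show τf ω = 0 ↔ ω ∈ Ef 0
      rw [hτf]
      exact CFTP.sInf_eq_zero_iff hne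
    | succ n =>
      show τf ω = n + 1 ↔ ω ∈ Ef (n+1) ∩ (Ef n)ᶜ
      rw [hτf]
      exact CFTP.sInf_eq_succ_iff hne hup n
  have hGbEb : ∀ n, Gb n ⊆ Eb n := by
    intro n; cases n with
    | zero => exact subset_rfl
    | succ n => exact Set.inter_subset_left
  have hGfEf : ∀ n, Gf n ⊆ Ef n := by
    intro n; cases n with
    | zero => exact subset_rfl
    | succ n => exact Set.inter_subset_left
  have haeb : ∀ n, {ω | τb ω = n} =ᵐ[μ] Gb n := by
    intro n
    rw [MeasureTheory.ae_eq_set]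
    constructor
    · refine measure_mono_null ?_ hN
      rintro ω ⟨h1, h2⟩
      by_contra hωN
      exact h2 ((hcharb ω hωN n).mp h1)
    · have he : Gb n \ {ω | τb ω = n} = ∅ := by
        rw [Set.diff_eq_empty]
        intro ω hω
        have hωN : ω ∉ ⋂ k, (Eb k)ᶜ := by
          intro hN2
          exact (Set.mem_iInter.mp hN2 n) (hGbEb n hω)
        exact (hcharb ω hωN n).mpr hω
      rw [he]; simp
  have haef : ∀ n, {ω | τf ω = n} =ᵐ[μ] Gf n := by
    intro n
    rw [MeasureTheory.ae_eq_set]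
    constructor
    · refine measure_mono_null ?_ hN'
      rintro ω ⟨h1, h2⟩
      by_contra hωN
      exact h2 ((hcharf ω hωN n).mp h1)
    · have he : Gf n \ {ω | τf ω = n} = ∅ := by
        rw [Set.diff_eq_empty]
        intro ω hω
        have hωN : ω ∉ ⋂ k, (Ef k)ᶜ := by
          intro hN2
          exact (Set.mem_iInter.mp hN2 n) (hGfEf n hω)
        exact (hcharf ω hωN n).mpr hω
      rw [he]; simp
  -- measures of the slices agree
  have hcast : ∀ (n : ℕ) (ω : Ω), (fun i : Fin n => U ((Fin.castSucc i : Fin (n+1)) : ℕ) ω)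
      = (fun i : Fin n => U (i:ℕ) ω) := by
    intro n ω; funext i; rw [Fin.coe_castSucc]
  have hEbQ : ∀ n, Eb n = {ω | (fun a : Fin (n+1) → A =>
      CFTP.Pb act n fun i : Fin n => a i.castSucc) (fun i : Fin (n+1) => U (i:ℕ) ω)} := by
    intro n
    rw [hEbP n]
    refine Set.ext fun ω => ?_
    simp only [Set.mem_setOf_eq]
    rw [hcast n ω]
  have hEfQ : ∀ n, Ef n = {ω | (fun a : Fin (n+1) → A =>
      CFTP.Pf act n fun i : Fin n => a i.castSucc) (fun i : Fin (n+1) => U (i:ℕ) ω)} := by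
    intro n
    rw [hEfP n]
    refine Set.ext fun ω => ?_
    simp only [Set.mem_setOf_eq]
    rw [hcast n ω]
  have hEbn1 : ∀ n, μ (Eb n) = ∑ a : Fin (n+1) → A,
      if CFTP.Pb act n (fun i : Fin n => a i.castSucc) then ∏ i, D (a i) else 0 := by
    intro n
    rw [hEbQ n]
    exact (hpair (n+1) (fun a : Fin (n+1) → A =>
      CFTP.Pb act n fun i : Fin n => a i.castSucc)).1
  have hEfn1 : ∀ n, μ (Ef n) = ∑ a : Fin (n+1) → A,
      if CFTP.Pf act n (fun i : Fin n => a i.castSucc) then ∏ i, D (a i) else 0 := by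
    intro n
    rw [hEfQ n]
    exact (hpair (n+1) (fun a : Fin (n+1) → A =>
      CFTP.Pf act n fun i : Fin n => a i.castSucc)).1
  have hGbset : ∀ n, Gb (n+1) = {ω | (fun a : Fin (n+1) → A => CFTP.Pb act (n+1) a
      ∧ ¬ CFTP.Pb act n fun i : Fin n => a i.castSucc) (fun i : Fin (n+1) => U (i:ℕ) ω)} := by
    intro n
    show Eb (n+1) ∩ (Eb n)ᶜ = _
    rw [hEbP (n+1), hEbQ n]
    exact Set.ext fun ω => Iff.rfl
  have hGfset : ∀ n, Gf (n+1) = {ω | (fun a : Fin (n+1) → A => CFTP.Pf act (n+1) a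
      ∧ ¬ CFTP.Pf act n fun i : Fin n => a i.castSucc) (fun i : Fin (n+1) => U (i:ℕ) ω)} := by
    intro n
    show Ef (n+1) ∩ (Ef n)ᶜ = _
    rw [hEfP (n+1), hEfQ n]
    exact Set.ext fun ω => Iff.rfl
  have hGbn1 : ∀ n, μ (Gb (n+1)) = ∑ a : Fin (n+1) → A,
      if CFTP.Pb act (n+1) a ∧ ¬ CFTP.Pb act n (fun i : Fin n => a i.castSucc)
      then ∏ i, D (a i) else 0 := by
    intro n
    rw [hGbset n]
    have h := (hpair (n+1) (fun a : Fin (n+1) → A => CFTP.Pb act (n+1) a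
      ∧ ¬ CFTP.Pb act n fun i : Fin n => a i.castSucc)).1
    convert h using 3
  have hGfn1 : ∀ n, μ (Gf (n+1)) = ∑ a : Fin (n+1) → A,
      if CFTP.Pf act (n+1) a ∧ ¬ CFTP.Pf act n (fun i : Fin n => a i.castSucc)
      then ∏ i, D (a i) else 0 := by
    intro n
    rw [hGfset n]
    have h := (hpair (n+1) (fun a : Fin (n+1) → A => CFTP.Pf act (n+1) a
      ∧ ¬ CFTP.Pf act n fun i : Fin n => a i.castSucc)).1
    convert h using 3
  have hGb_add : ∀ n, μ (Gb (n+1)) + μ (Eb n) = μ (Eb (n+1)) := by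
    intro n
    rw [hGbn1 n, hEbn1 n, hEb (n+1), ← Finset.sum_add_distrib]
    refine Finset.sum_congr rfl fun a _ => ?_
    by_cases h1 : CFTP.Pb act n (fun i : Fin n => a i.castSucc)
    · have h2 : CFTP.Pb act (n+1) a := CFTP.pb_step a h1
      simp [h1, h2]
    · by_cases h2 : CFTP.Pb act (n+1) a <;> simp [h1, h2]
  have hGf_add : ∀ n, μ (Gf (n+1)) + μ (Ef n) = μ (Ef (n+1)) := by
    intro n
    rw [hGfn1 n, hEfn1 n, hEf (n+1), ← Finset.sum_add_distrib]
    refine Finset.sum_congr rfl fun a _ => ?_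
    by_cases h1 : CFTP.Pf act n (fun i : Fin n => a i.castSucc)
    · have h2 : CFTP.Pf act (n+1) a := CFTP.pf_step a h1
      simp [h1, h2]
    · by_cases h2 : CFTP.Pf act (n+1) a <;> simp [h1, h2]
  have hG : ∀ n, μ (Gb n) = μ (Gf n) := by
    intro n
    cases n with
    | zero => exact hEbEf 0
    | succ n =>
      have h1 := hGb_add n
      have h2 := hGf_add n
      rw [hEbEf n] at h1
      rw [← hEbEf (n+1)] at h2
      have h3 : μ (Ef n) + μ (Gb (n+1)) = μ (Ef n) + μ (Gf (n+1)) := by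
        rw [add_comm (μ (Ef n)) _, add_comm (μ (Ef n)) _, h1, h2]
      exact (ENNReal.add_right_inj (measure_ne_top μ _)).mp h3
  -- null measurability
  have hGbnull : ∀ n, NullMeasurableSet (Gb n) μ := by
    intro n
    cases n with
    | zero =>
      rw [show Gb 0 = Eb 0 from rfl, hEbP 0]
      exact CFTP.ev_nullMeasurableSet μ D hDsum U hiid 0 _
    | succ n =>
      rw [hGbset n]
      exact CFTP.ev_nullMeasurableSet μ D hDsum U hiid (n+1)
        (fun a : Fin (n+1) → A => CFTP.Pb act (n+1) a
          ∧ ¬ CFTP.Pb act n fun i : Fin n => a i.castSucc)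
  have hGfnull : ∀ n, NullMeasurableSet (Gf n) μ := by
    intro n
    cases n with
    | zero =>
      rw [show Gf 0 = Ef 0 from rfl, hEfP 0]
      exact CFTP.ev_nullMeasurableSet μ D hDsum U hiid 0 _
    | succ n =>
      rw [hGfset n]
      exact CFTP.ev_nullMeasurableSet μ D hDsum U hiid (n+1)
        (fun a : Fin (n+1) → A => CFTP.Pf act (n+1) a
          ∧ ¬ CFTP.Pf act n fun i : Fin n => a i.castSucc)
  have hτbnull : ∀ n : ℕ, NullMeasurableSet {ω | τb ω = n} μ := fun n =>
    (hGbnull n).congr (haeb n).symm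
  have hτfnull : ∀ n : ℕ, NullMeasurableSet {ω | τf ω = n} μ := fun n =>
    (hGfnull n).congr (haef n).symm
  have hpre : ∀ (g : Ω → ℕ) (s : Set ℕ), g ⁻¹' s = ⋃ n ∈ s, {ω | g ω = n} := by
    intro g s
    ext ω
    simp only [Set.mem_preimage, Set.mem_iUnion, Set.mem_setOf_eq]
    exact ⟨fun h => ⟨g ω, h, rfl⟩, fun ⟨n, hn, he⟩ => he ▸ hn⟩
  have hτbae : AEMeasurable τb μ := by
    apply MeasureTheory.NullMeasurable.aemeasurable
    intro s _
    rw [hpre τb s]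
    exact NullMeasurableSet.biUnion (Set.to_countable s) fun n _ => hτbnull n
  have hτfae : AEMeasurable τf μ := by
    apply MeasureTheory.NullMeasurable.aemeasurable
    intro s _
    rw [hpre τf s]
    exact NullMeasurableSet.biUnion (Set.to_countable s) fun n _ => hτfnull n
  have hdisj : ∀ g : Ω → ℕ, ∀ s : Set ℕ,
      s.Pairwise (Function.onFun (MeasureTheory.AEDisjoint μ) (fun n => {ω | g ω = n})) := by
    intro g s m _ n _ hmn
    exact Disjoint.aedisjoint (Set.disjoint_left.mpr fun ω h1 h2 => hmn (h1.symm.trans h2))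
  refine Measure.ext fun s hs => ?_
  rw [Measure.map_apply_of_aemeasurable hτbae hs, Measure.map_apply_of_aemeasurable hτfae hs,
    hpre τb s, hpre τf s,
    measure_biUnion₀ (Set.to_countable s) (hdisj τb s) (fun n _ => hτbnull n),
    measure_biUnion₀ (Set.to_countable s) (hdisj τf s) (fun n _ => hτfnull n)]
  refine tsum_congr fun n => ?_
  calc μ {ω | τb ω = (n:ℕ)} = μ (Gb (n:ℕ)) := measure_congr (haeb (n:ℕ))
    _ = μ (Gf (n:ℕ)) := hG (n:ℕ)
    _ = μ {ω | τf ω = (n:ℕ)} := (measure_congr (haef (n:ℕ))).symm
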